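/- The only nontrivial geometric-progression triples (α, αβ, αβ²) with α, β ∈ ℤ[i], α ≠ 0, satisfying x² + y² + z² = xyz are (3, 3, 3), (−3, 3, −3), (i, −1, −i), and (−i, −1, i). -/

import Mathlib

theorem stmt_13 (α β : GaussianInt) (hα : α ≠ 0) :
    α ^ 2 + (α * β) ^ 2 + (α * β ^ 2) ^ 2 = α * (α * β) * (α * β ^ 2) ↔
    (α, α * β, α * β ^ 2) ∈
      ({(3, 3, 3), (-3, 3, -3), (⟨0, 1⟩, -1, ⟨0, -1⟩), (⟨0, -1⟩, -1, ⟨0, 1⟩)} :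
        Set (GaussianInt × GaussianInt × GaussianInt)) := by
  constructor
  · intro h
    have hα2 : α ^ 2 ≠ 0 := pow_ne_zero _ hα
    have h1 : 1 + β ^ 2 + β ^ 4 = α * β ^ 3 :=
      mul_left_cancel₀ hα2 (by linear_combination h)
    have hdvd : β ∣ 1 := ⟨α * β ^ 2 - β - β ^ 3, by linear_combination h1⟩
    obtain ⟨c, hc⟩ := hdvd
    have hnd : β.norm ∣ 1 := ⟨c.norm, by rw [← Zsqrtd.norm_mul, ← hc]; simp [Zsqrtd.norm]⟩
    have hpos : 0 ≤ β.norm := Zsqrtd.norm_nonneg (by norm_num) β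
    have hnorm : β.norm = 1 := by
      rcases Int.isUnit_iff.mp (isUnit_of_dvd_one hnd) with h' | h' <;> omega
    have hβ : β = 1 ∨ β = -1 ∨ β = (⟨0, 1⟩ : GaussianInt) ∨ β = (⟨0, -1⟩ : GaussianInt) := by
      obtain ⟨a, b⟩ := β
      simp only [Zsqrtd.norm] at hnorm
      have hn : a * a + b * b = 1 := by linarith
      have ha1 : -1 ≤ a := by nlinarith [mul_self_nonneg (a + 1), mul_self_nonneg b]
      have ha2 : a ≤ 1 := by nlinarith [mul_self_nonneg (a - 1), mul_self_nonneg b]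
      have hb1 : -1 ≤ b := by nlinarith [mul_self_nonneg (b + 1), mul_self_nonneg a]
      have hb2 : b ≤ 1 := by nlinarith [mul_self_nonneg (b - 1), mul_self_nonneg a]
      simp only [Zsqrtd.ext_iff, Zsqrtd.re_one, Zsqrtd.im_one, Zsqrtd.re_neg, Zsqrtd.im_neg]
      interval_cases a <;> interval_cases b <;> omega
    simp only [Set.mem_insert_iff, Set.mem_singleton_iff, Prod.mk.injEq]
    rcases hβ with rfl | rfl | rfl | rfl
    · have : α = 3 := by linear_combination -h1
      subst this; left; exact ⟨rfl, by decide, by decide⟩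
    · have : α = -3 := by linear_combination h1
      subst this; right; left; exact ⟨rfl, by decide, by decide⟩
    · have e1 : (1 : GaussianInt) + (⟨0,1⟩ : GaussianInt) ^ 2 + (⟨0,1⟩ : GaussianInt) ^ 4 = 1 := by decide
      have e2 : (⟨0,1⟩ : GaussianInt) ^ 3 = ⟨0,-1⟩ := by decide
      rw [e1, e2] at h1
      have hαv : α = ⟨0,1⟩ := by
        have h5 := congrArg (· * (⟨0,1⟩ : GaussianInt)) h1
        simp only [one_mul, mul_assoc,
          show (⟨0,-1⟩ : GaussianInt) * ⟨0,1⟩ = 1 from by decide, mul_one] at h5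
        exact h5.symm
      subst hαv; right; right; left; exact ⟨rfl, by decide, by decide⟩
    · have e1 : (1 : GaussianInt) + (⟨0,-1⟩ : GaussianInt) ^ 2 + (⟨0,-1⟩ : GaussianInt) ^ 4 = 1 := by decide
      have e2 : (⟨0,-1⟩ : GaussianInt) ^ 3 = ⟨0,1⟩ := by decide
      rw [e1, e2] at h1
      have hαv : α = ⟨0,-1⟩ := by
        have h5 := congrArg (· * (⟨0,-1⟩ : GaussianInt)) h1
        simp only [one_mul, mul_assoc,
          show (⟨0,1⟩ : GaussianInt) * ⟨0,-1⟩ = 1 from by decide, mul_one] at h5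
        exact h5.symm
      subst hαv; right; right; right; exact ⟨rfl, by decide, by decide⟩
  · intro h
    simp only [Set.mem_insert_iff, Set.mem_singleton_iff, Prod.mk.injEq] at h
    rcases h with ⟨h1,h2,h3⟩|⟨h1,h2,h3⟩|⟨h1,h2,h3⟩|⟨h1,h2,h3⟩ <;>
      rw [h2, h3, h1] <;> decide
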